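/- The 3-rainbow index of the complete bipartite graph K_{3,3} equals 3. -/

import Mathlib

open SimpleGraph Finset

variable {V : Type*} {W : Type*}

/-- A rainbow tree in `G` w.r.t. coloring `c` containing `x, y, z`. -/
def SimpleGraph.RainbowTreeFor (G : SimpleGraph V) (c : Sym2 V → ℕ) (x y z : V) : Prop :=
  ∃ T : G.Subgraph, T.coe.IsTree ∧ x ∈ T.verts ∧ y ∈ T.verts ∧ z ∈ T.verts ∧
    Set.InjOn c T.edgeSet

/-- `c` is a 3-rainbow coloring of `G` using colors `< k`. -/
def SimpleGraph.IsRainbow3Coloring (G : SimpleGraph V) (c : Sym2 V → ℕ) (k : ℕ) : Prop :=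
  (∀ e ∈ G.edgeSet, c e < k) ∧ ∀ x y z : V, G.RainbowTreeFor c x y z

/-- The 3-rainbow index of `G`. -/
noncomputable def SimpleGraph.rx3 (G : SimpleGraph V) : ℕ :=
  sInf {k | ∃ c, G.IsRainbow3Coloring c k}

/-- `D` is a `k`-dominating set. -/
def SimpleGraph.IsKDominatingSet (G : SimpleGraph V) (k : ℕ) (D : Set V) : Prop :=
  ∀ v ∉ D, k ≤ (G.neighborSet v ∩ D).ncard

/-- `D` is a connected `k`-dominating set. -/
def SimpleGraph.IsConnectedKDominatingSet (G : SimpleGraph V) (k : ℕ) (D : Set V) : Prop :=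
  G.IsKDominatingSet k D ∧ (G.induce D).Connected

/-- The connected `k`-domination number (`⊤` if no connected `k`-dominating set exists). -/
noncomputable def SimpleGraph.connectedKDominationNum (G : SimpleGraph V) (k : ℕ) : ℕ∞ :=
  sInf {m | ∃ D : Set V, G.IsConnectedKDominatingSet k D ∧ (D.ncard : ℕ∞) = m}

/-- The domination number. -/
noncomputable def SimpleGraph.domNum (G : SimpleGraph V) : ℕ∞ :=
  sInf {m | ∃ D : Set V, G.IsKDominatingSet 1 D ∧ (D.ncard : ℕ∞) = m}

/-- Maximum number of connected components of `G - u` over vertices `u`. -/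
noncomputable def SimpleGraph.qmax [Fintype V] (G : SimpleGraph V) : ℕ :=
  Finset.univ.sup fun u : V => Nat.card (G.induce ({u}ᶜ : Set V)).ConnectedComponent

/-- `G` is 2-connected. -/
def SimpleGraph.TwoConnectedG [Fintype V] (G : SimpleGraph V) : Prop :=
  3 ≤ Fintype.card V ∧ G.Connected ∧ ∀ v : V, (G.induce ({v}ᶜ : Set V)).Connected

/-- `B` is (the vertex set of) a block of `G`: a maximal set inducing a connected
subgraph without cut vertices. -/
def SimpleGraph.IsBlockSet (G : SimpleGraph V) (B : Set V) : Prop :=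
  (G.induce B).Connected ∧
  (∀ v ∈ B, B = {v} ∨ (G.induce (B \ {v})).Connected) ∧
  ∀ B' : Set V, B ⊆ B' →
    ((G.induce B').Connected ∧ ∀ v ∈ B', B' = {v} ∨ (G.induce (B' \ {v})).Connected) →
    B' = B

/-- The induced subgraph on `B` is a cycle. -/
def SimpleGraph.IsCycleSet (G : SimpleGraph V) (B : Set V) : Prop :=
  (G.induce B).Connected ∧ 3 ≤ B.ncard ∧
    ∀ v : B, ((G.induce B).neighborSet v).ncard = 2

/-- `G` has no induced subgraph isomorphic to `H`. -/
def IsInducedSubgraphFree (G : SimpleGraph V) (H : SimpleGraph W) : Prop :=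
  ¬ ∃ f : W ↪ V, ∀ a b : W, G.Adj (f a) (f b) ↔ H.Adj a b


lemma star_acyclic {α : Type*} {H : SimpleGraph α} {v₀ : α}
    (hstar : ∀ ⦃a b⦄, H.Adj a b → a = v₀ ∨ b = v₀) : H.IsAcyclic := by
  classical
  have key : ∀ u : α, u ≠ v₀ → ∀ c : H.Walk u u, ¬ c.IsCycle := by
    intro u hu c hc
    cases c with
    | nil => exact hc.ne_nil rfl
    | cons h p =>
      rename_i w
      have hwv : w = v₀ := (hstar h).resolve_left hu
      subst hwv
      cases p with
      | nil => exact hu rfl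
      | cons h2 q =>
        rename_i x
        have hx : x ≠ w := fun hxe => H.irrefl (hxe ▸ h2)
        have hpath : (SimpleGraph.Walk.cons h2 q).IsPath :=
          ((SimpleGraph.Walk.cons_isCycle_iff _ _).mp hc).1
        have hnd := (SimpleGraph.Walk.isPath_def _).mp hpath
        rw [SimpleGraph.Walk.support_cons, List.nodup_cons] at hnd
        cases q with
        | nil =>
          have h3 := hc.three_le_length
          simp only [SimpleGraph.Walk.length_cons, SimpleGraph.Walk.length_nil] at h3
          omega
        | cons h3 r =>
          rename_i y
          have hyv : y = w := (hstar h3).resolve_left hx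
          refine hnd.1 ?_
          rw [SimpleGraph.Walk.support_cons]
          exact List.mem_cons_of_mem _ (hyv ▸ r.start_mem_support)
  intro u c hc
  cases c with
  | nil => exact hc.ne_nil rfl
  | cons h p =>
    rename_i w
    by_cases hu : u = v₀
    · subst hu
      have hw : w ≠ u := h.ne'
      have hmem : w ∈ (SimpleGraph.Walk.cons h p).support := by
        rw [SimpleGraph.Walk.support_cons]
        exact List.mem_cons_of_mem _ p.start_mem_support
      exact key w hw _ (hc.rotate hmem)
    · exact key u hu _ hc

/-- Star subgraph with center `v` and leaves `S`. -/
def starSub (G : SimpleGraph V) (v : V) (S : Set V) (h : ∀ u ∈ S, G.Adj v u) :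
    G.Subgraph where
  verts := insert v S
  Adj a b := (a = v ∧ b ∈ S) ∨ (b = v ∧ a ∈ S)
  adj_sub := by rintro a b (⟨rfl, hb⟩ | ⟨rfl, ha⟩); exacts [h _ hb, (h _ ha).symm]
  edge_vert := by
    rintro a b (⟨rfl, hb⟩ | ⟨rfl, ha⟩)
    exacts [Set.mem_insert _ _, Set.mem_insert_of_mem _ ha]
  symm := ⟨fun a b => Or.symm⟩

lemma starSub_edgeSet (G : SimpleGraph V) (v : V) (S : Set V) (h : ∀ u ∈ S, G.Adj v u) :
    (starSub G v S h).edgeSet = (fun u => s(v, u)) '' S := by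
  ext e
  induction e using Sym2.ind with
  | _ a b =>
    simp only [Subgraph.mem_edgeSet, starSub, Set.mem_image]
    constructor
    · rintro (⟨rfl, hb⟩ | ⟨rfl, ha⟩)
      · exact ⟨b, hb, rfl⟩
      · exact ⟨a, ha, Sym2.eq_swap⟩
    · rintro ⟨u, hu, he⟩
      rw [Sym2.eq_iff] at he
      rcases he with ⟨rfl, rfl⟩ | ⟨rfl, rfl⟩
      · exact Or.inl ⟨rfl, hu⟩
      · exact Or.inr ⟨rfl, hu⟩

lemma starSub_coe_isTree (G : SimpleGraph V) (v : V) (S : Set V) (h : ∀ u ∈ S, G.Adj v u) :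
    (starSub G v S h).coe.IsTree := by
  set T := starSub G v S h with hT
  have hv0 : v ∈ T.verts := Set.mem_insert _ _
  have reach : ∀ a : T.verts, T.coe.Reachable a ⟨v, hv0⟩ := by
    rintro ⟨a, ha⟩
    rcases Set.mem_insert_iff.mp ha with rfl | haS
    · rfl
    · exact SimpleGraph.Adj.reachable (Or.inr ⟨rfl, haS⟩)
  constructor
  · haveI : Nonempty ↑T.verts := ⟨⟨v, hv0⟩⟩
    exact ⟨fun a b => (reach a).trans (reach b).symm⟩
  · apply star_acyclic (v₀ := (⟨v, hv0⟩ : T.verts))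
    rintro ⟨a, ha⟩ ⟨b, hb⟩ (⟨h1, _⟩ | ⟨h1, _⟩)
    · exact Or.inl (Subtype.ext h1)
    · exact Or.inr (Subtype.ext h1)

lemma rainbow_of_star (G : SimpleGraph V) (c : Sym2 V → ℕ) (v : V) (S : Set V)
    (h : ∀ u ∈ S, G.Adj v u) (hinj : Set.InjOn (fun u => c s(v, u)) S)
    {x y z : V} (hx : x ∈ insert v S) (hy : y ∈ insert v S) (hz : z ∈ insert v S) :
    G.RainbowTreeFor c x y z := by
  refine ⟨starSub G v S h, starSub_coe_isTree G v S h, hx, hy, hz, ?_⟩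
  rw [starSub_edgeSet]
  rintro e1 ⟨u1, hu1, rfl⟩ e2 ⟨u2, hu2, rfl⟩ hce
  exact congrArg (fun u => s(v, u)) (hinj hu1 hu2 hce)

/-- The coloring of `K_{3,3}` giving edge `(i, j)` the color `i + j mod 3`. -/
def col : Sym2 (Fin 3 ⊕ Fin 3) → ℕ :=
  Sym2.lift ⟨fun a b =>
    match a, b with
    | Sum.inl i, Sum.inr j => ((i + j : Fin 3) : ℕ)
    | Sum.inr j, Sum.inl i => ((i + j : Fin 3) : ℕ)
    | _, _ => 0,
    by rintro (i | i) (j | j) <;> rfl⟩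

lemma injL (j : Fin 3) :
    Set.InjOn (fun u => col s(Sum.inr j, u)) (Set.range Sum.inl) := by
  rintro _ ⟨t1, rfl⟩ _ ⟨t2, rfl⟩ hce
  have h1 : (t1 + j : Fin 3) = t2 + j := Fin.val_injective hce
  exact congrArg Sum.inl (add_right_cancel h1)

lemma injR (i : Fin 3) :
    Set.InjOn (fun u => col s(Sum.inl i, u)) (Set.range Sum.inr) := by
  rintro _ ⟨t1, rfl⟩ _ ⟨t2, rfl⟩ hce
  have h1 : (i + t1 : Fin 3) = i + t2 := Fin.val_injective hce
  exact congrArg Sum.inr (add_left_cancel h1)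

lemma adjL (j : Fin 3) :
    ∀ u ∈ Set.range (Sum.inl : Fin 3 → Fin 3 ⊕ Fin 3),
      (completeBipartiteGraph (Fin 3) (Fin 3)).Adj (Sum.inr j) u := by
  rintro _ ⟨t, rfl⟩; simp [completeBipartiteGraph]

lemma adjR (i : Fin 3) :
    ∀ u ∈ Set.range (Sum.inr : Fin 3 → Fin 3 ⊕ Fin 3),
      (completeBipartiteGraph (Fin 3) (Fin 3)).Adj (Sum.inl i) u := by
  rintro _ ⟨t, rfl⟩; simp [completeBipartiteGraph]

lemma rbL (j : Fin 3) {x y z : Fin 3 ⊕ Fin 3}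
    (hx : x ∈ insert (Sum.inr j) (Set.range (Sum.inl : Fin 3 → Fin 3 ⊕ Fin 3)))
    (hy : y ∈ insert (Sum.inr j) (Set.range (Sum.inl : Fin 3 → Fin 3 ⊕ Fin 3)))
    (hz : z ∈ insert (Sum.inr j) (Set.range (Sum.inl : Fin 3 → Fin 3 ⊕ Fin 3))) :
    (completeBipartiteGraph (Fin 3) (Fin 3)).RainbowTreeFor col x y z :=
  rainbow_of_star _ col _ _ (adjL j) (injL j) hx hy hz

lemma rbR (i : Fin 3) {x y z : Fin 3 ⊕ Fin 3}
    (hx : x ∈ insert (Sum.inl i) (Set.range (Sum.inr : Fin 3 → Fin 3 ⊕ Fin 3)))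
    (hy : y ∈ insert (Sum.inl i) (Set.range (Sum.inr : Fin 3 → Fin 3 ⊕ Fin 3)))
    (hz : z ∈ insert (Sum.inl i) (Set.range (Sum.inr : Fin 3 → Fin 3 ⊕ Fin 3))) :
    (completeBipartiteGraph (Fin 3) (Fin 3)).RainbowTreeFor col x y z :=
  rainbow_of_star _ col _ _ (adjR i) (injR i) hx hy hz

lemma col_mem : 3 ∈ {k | ∃ c, (completeBipartiteGraph (Fin 3) (Fin 3)).IsRainbow3Coloring c k} := by
  refine ⟨col, ?_, ?_⟩
  · intro e he
    induction e using Sym2.ind with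
    | _ a b =>
      rw [SimpleGraph.mem_edgeSet] at he
      rcases a with i | i <;> rcases b with j | j
      · simp [completeBipartiteGraph] at he
      · exact (i + j).isLt
      · exact (j + i).isLt
      · simp [completeBipartiteGraph] at he
  · intro x y z
    rcases x with a | a <;> rcases y with b | b <;> rcases z with d | d
    · exact rbL 0 (by simp) (by simp) (by simp)
    · exact rbL d (by simp) (by simp) (by simp)
    · exact rbL b (by simp) (by simp) (by simp)
    · exact rbR a (by simp) (by simp) (by simp)
    · exact rbL a (by simp) (by simp) (by simp)
    · exact rbR b (by simp) (by simp) (by simp)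
    · exact rbR d (by simp) (by simp) (by simp)
    · exact rbR 0 (by simp) (by simp) (by simp)

theorem stmt12 : (completeBipartiteGraph (Fin 3) (Fin 3)).rx3 = 3 := by
  refine le_antisymm (Nat.sInf_le col_mem) (le_csInf ⟨3, col_mem⟩ ?_)
  rintro k ⟨c, hlt, hall⟩
  by_contra hk
  push_neg at hk
  obtain ⟨T, hT, h0, h1, h2', hinj⟩ := hall (Sum.inl 0) (Sum.inl 1) (Sum.inl 2)
  obtain ⟨p⟩ := hT.isConnected.preconnected ⟨Sum.inl 0, h0⟩ ⟨Sum.inl 1, h1⟩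
  have hne : (⟨Sum.inl 0, h0⟩ : T.verts) ≠ ⟨Sum.inl 1, h1⟩ := fun hvv =>
    (by decide : (Sum.inl 0 : Fin 3 ⊕ Fin 3) ≠ Sum.inl 1) (Subtype.ext_iff.mp hvv)
  have hpn : ¬ p.Nil := SimpleGraph.Walk.not_nil_of_ne hne
  have hadj := p.adj_snd hpn
  have hGadj := T.coe_adj_sub _ _ hadj
  have hbv := (p.getVert 1).2
  rcases hbm : ((p.getVert 1 : T.verts) : Fin 3 ⊕ Fin 3) with t | t
  · rw [hbm] at hGadj
    simp [completeBipartiteGraph] at hGadj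
  rw [hbm] at hbv
  haveI : Fintype ↥T.verts := (Set.toFinite T.verts).fintype
  haveI : Fintype ↥T.coe.edgeSet := (Set.toFinite _).fintype
  have hcard := hT.card_edgeFinset
  have he1 : T.coe.edgeFinset.card = T.coe.edgeSet.ncard :=
    (Set.ncard_eq_toFinset_card' _).symm
  have he2 : T.coe.edgeSet.ncard = T.edgeSet.ncard := by
    conv_rhs => rw [← T.image_coe_edgeSet_coe]
    exact (Set.ncard_image_of_injective _ (Sym2.map.injective Subtype.val_injective)).symm
  have he3 : T.edgeSet.ncard ≤ k := by
    have himg : c '' T.edgeSet ⊆ ↑(Finset.Iio k) := by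
      rintro n ⟨e, he, rfl⟩
      simpa using hlt e (T.edgeSet_subset he)
    calc T.edgeSet.ncard = (c '' T.edgeSet).ncard := (Set.ncard_image_of_injOn hinj).symm
      _ ≤ (↑(Finset.Iio k) : Set ℕ).ncard := Set.ncard_le_ncard himg (Finset.finite_toSet _)
      _ = k := by rw [Set.ncard_coe_finset, Nat.card_Iio]
  have hv4 : 4 ≤ Fintype.card ↥T.verts := by
    have hsub : (↑({Sum.inl 0, Sum.inl 1, Sum.inl 2, Sum.inr t} :
        Finset (Fin 3 ⊕ Fin 3)) : Set (Fin 3 ⊕ Fin 3)) ⊆ T.verts := by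
      intro u hu
      simp only [Finset.coe_insert, Set.mem_insert_iff, Finset.coe_singleton,
        Set.mem_singleton_iff] at hu
      rcases hu with rfl | rfl | rfl | rfl <;> assumption
    have hc4 : ({Sum.inl 0, Sum.inl 1, Sum.inl 2, Sum.inr t} :
        Finset (Fin 3 ⊕ Fin 3)).card = 4 := by fin_cases t <;> decide
    calc (4 : ℕ) = (↑({Sum.inl 0, Sum.inl 1, Sum.inl 2, Sum.inr t} :
          Finset (Fin 3 ⊕ Fin 3)) : Set (Fin 3 ⊕ Fin 3)).ncard := by
          rw [Set.ncard_coe_finset, hc4]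
      _ ≤ T.verts.ncard := Set.ncard_le_ncard hsub (Set.toFinite _)
      _ = Fintype.card ↥T.verts := by rw [Set.ncard_eq_toFinset_card', Set.toFinset_card]
  rw [he1, he2] at hcard
  omega
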